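/- Let q be a prime power and n ≥ 1, and let H be a Singer subgroup of GL_n(𝔽_q). Then the normalizer N of H in GL_n(𝔽_q) has cardinality |N| = n(q^n − 1). -/

import Mathlib

open Matrix Polynomial

section SingerAux

set_option linter.unusedSectionVars false
variable {F : Type*} [Field F] [Fintype F] {n : ℕ}

private lemma matrix_ext_mulVec {A B : Matrix (Fin n) (Fin n) F}
    (h : ∀ v, A *ᵥ v = B *ᵥ v) : A = B := by
  ext i j
  have := congrFun (h (Pi.single j 1)) i
  simpa [Matrix.mulVec_single] using this

private lemma mem_adjoin_iff' {gm s : Matrix (Fin n) (Fin n) F} :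
    s ∈ Algebra.adjoin F {gm} ↔ ∃ p : F[X], aeval gm p = s := by
  rw [Algebra.adjoin_singleton_eq_range_aeval]
  exact ⟨fun h => h, fun h => h⟩

private lemma adjoin_comm {gm a b : Matrix (Fin n) (Fin n) F}
    (ha : a ∈ Algebra.adjoin F {gm}) (hb : b ∈ Algebra.adjoin F {gm}) :
    Commute a b := by
  rw [mem_adjoin_iff'] at ha hb
  obtain ⟨p, rfl⟩ := ha
  obtain ⟨q, rfl⟩ := hb
  unfold Commute SemiconjBy
  rw [← _root_.map_mul, ← _root_.map_mul, mul_comm]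

private lemma card_adjoin_le (gm : Matrix (Fin n) (Fin n) F) :
    Nat.card (Algebra.adjoin F {gm}) ≤ Fintype.card F ^ n := by
  classical
  rcases Nat.eq_zero_or_pos n with rfl | hn
  · have : Subsingleton (Matrix (Fin 0) (Fin 0) F) := by
      constructor; intro a b; ext i j; exact absurd i.2 (Nat.not_lt_zero _)
    have hsub : Subsingleton (Algebra.adjoin F {gm}) :=
      ⟨fun a b => Subtype.ext (Subsingleton.elim _ _)⟩
    have hne : Nonempty (Algebra.adjoin F {gm}) := ⟨1⟩
    have h1 : Nat.card (Algebra.adjoin F {gm}) = 1 := @Nat.card_unique _ hne hsub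
    rw [pow_zero, h1]
  set S := Algebra.adjoin F {gm}
  have hsurj : Function.Surjective
      (fun c : Fin n → F => (⟨∑ i : Fin n, c i • gm ^ (i : ℕ),
        Subalgebra.sum_mem S fun i _ => Subalgebra.smul_mem S (pow_mem (Algebra.self_mem_adjoin_singleton F gm) _) _⟩ : S)) := by
    rintro ⟨s, hs⟩
    obtain ⟨p, rfl⟩ := mem_adjoin_iff'.mp hs
    have h0 : n ≠ 0 ∨ True := Or.inr trivial
    -- reduce mod charpoly
    have hC : aeval gm gm.charpoly = 0 := Matrix.aeval_self_charpoly gm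
    have hmod : aeval gm p = aeval gm (p %ₘ gm.charpoly) := by
      conv_lhs => rw [← Polynomial.modByMonic_add_div p gm.charpoly]
      rw [map_add, _root_.map_mul, hC, zero_mul, add_zero]
    by_cases hpz : p %ₘ gm.charpoly = 0
    · refine ⟨0, ?_⟩
      simp only [Subtype.mk_eq_mk, hmod, hpz, map_zero]
      simp
    · have hdeg : (p %ₘ gm.charpoly).natDegree < n := by
        have := Polynomial.natDegree_modByMonic_lt p gm.charpoly_monic
          (by intro h1; have := Matrix.charpoly_natDegree_eq_dim (R := F) gm; rw [h1] at this; simp [Fintype.card_fin] at this; omega)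
        rwa [Matrix.charpoly_natDegree_eq_dim, Fintype.card_fin] at this
      refine ⟨fun i => (p %ₘ gm.charpoly).coeff i, ?_⟩
      simp only [Subtype.mk_eq_mk, hmod]
      rw [Polynomial.aeval_eq_sum_range' hdeg, ← Fin.sum_univ_eq_sum_range]
  calc Nat.card S ≤ Nat.card (Fin n → F) := Nat.card_le_card_of_surjective _ hsurj
    _ = Fintype.card F ^ n := by simp [Nat.card_eq_fintype_card]

private lemma val_pow_ne_zero (hn : 1 ≤ n) (g : GL (Fin n) F) (k : ℕ) :
    ((g : Matrix (Fin n) (Fin n) F)) ^ k ≠ 0 := by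
  have : Nonempty (Fin n) := ⟨⟨0, hn⟩⟩
  intro h
  have h1 : ((g ^ k : GL (Fin n) F) : Matrix (Fin n) (Fin n) F) = 0 := by
    rw [Units.val_pow_eq_pow_val]; exact h
  have := congrArg (· * ((g ^ k)⁻¹ : GL (Fin n) F).val) h1
  simp only [Units.mul_inv, zero_mul] at this
  exact one_ne_zero this

private lemma pow_val_inj (g : GL (Fin n) F) {k l : ℕ}
    (hk : k < orderOf g) (hl : l < orderOf g)
    (h : ((g : Matrix (Fin n) (Fin n) F)) ^ k = ((g : Matrix (Fin n) (Fin n) F)) ^ l) : k = l := by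
  have hg : g ^ k = g ^ l := Units.ext (by
    rw [Units.val_pow_eq_pow_val, Units.val_pow_eq_pow_val]; exact h)
  have := pow_eq_pow_iff_modEq.mp hg
  exact Nat.ModEq.eq_of_lt_of_lt this hk hl

private lemma adjoin_struct (hn : 1 ≤ n) (g : GL (Fin n) F)
    (hord : orderOf g = Fintype.card F ^ n - 1) :
    Nat.card (Algebra.adjoin F {((g : Matrix (Fin n) (Fin n) F))}) = Fintype.card F ^ n ∧
    ∀ s ∈ Algebra.adjoin F {((g : Matrix (Fin n) (Fin n) F))}, s ≠ 0 →
      ∃ k : ℕ, ((g : Matrix (Fin n) (Fin n) F)) ^ k = s := by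
  classical
  set q := Fintype.card F with hq
  have hq2 : 2 ≤ q := Fintype.one_lt_card
  have hqn : 2 ≤ q ^ n := le_trans hq2 (Nat.le_self_pow (by omega) q)
  set gm : Matrix (Fin n) (Fin n) F := (g : Matrix (Fin n) (Fin n) F) with hgm
  set S := Algebra.adjoin F {gm} with hS
  have hmem : ∀ k : ℕ, gm ^ k ∈ S :=
    fun k => pow_mem (Algebra.self_mem_adjoin_singleton F gm) k
  set Ψ : Option (Fin (q ^ n - 1)) → S := fun o =>
    Option.rec (0 : S) (fun k => ⟨gm ^ (k : ℕ), hmem _⟩) o with hΨ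
  have hinj : Function.Injective Ψ := by
    rintro (_ | k) (_ | l) h
    · rfl
    · exfalso
      have : (0 : Matrix (Fin n) (Fin n) F) = gm ^ (l : ℕ) := congrArg Subtype.val h
      exact val_pow_ne_zero hn g l this.symm
    · exfalso
      have : gm ^ (k : ℕ) = 0 := congrArg Subtype.val h
      exact val_pow_ne_zero hn g k this
    · have : gm ^ (k : ℕ) = gm ^ (l : ℕ) := congrArg Subtype.val h
      have := pow_val_inj g (by rw [hord]; exact k.2) (by rw [hord]; exact l.2) this
      simp [Option.some_inj, Fin.ext_iff, this]
  have hcardle : Nat.card (Option (Fin (q ^ n - 1))) ≤ Nat.card S :=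
    Nat.card_le_card_of_injective Ψ hinj
  have hcardO : Nat.card (Option (Fin (q ^ n - 1))) = q ^ n := by
    simp [Nat.card_eq_fintype_card]; omega
  have hcard : Nat.card S = q ^ n :=
    le_antisymm (card_adjoin_le gm) (hcardO ▸ hcardle)
  have hbij : Function.Bijective Ψ := by
    have : Finite S := Subtype.finite
    exact (Nat.bijective_iff_injective_and_card Ψ).mpr ⟨hinj, by rw [hcardO, hcard]⟩
  refine ⟨hcard, ?_⟩
  intro s hsS hs0
  obtain ⟨o, ho⟩ := hbij.surjective ⟨s, hsS⟩
  cases o with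
  | none =>
    exfalso; apply hs0
    have := congrArg Subtype.val ho
    exact this.symm
  | some k =>
    exact ⟨k, congrArg Subtype.val ho⟩
private lemma cent_mem (hn : 1 ≤ n) (g : GL (Fin n) F)
    (hord : orderOf g = Fintype.card F ^ n - 1) (x : GL (Fin n) F)
    (hx : Commute ((x : Matrix (Fin n) (Fin n) F)) ((g : Matrix (Fin n) (Fin n) F))) :
    ∃ k : ℕ, g ^ k = x := by
  classical
  have hne : Nonempty (Fin n) := ⟨⟨0, hn⟩⟩
  have hMnt : Nontrivial (Matrix (Fin n) (Fin n) F) := inferInstance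
  set q := Fintype.card F with hqdef
  set gm : Matrix (Fin n) (Fin n) F := (g : Matrix (Fin n) (Fin n) F) with hgm
  set S := Algebra.adjoin F {gm} with hS
  have hmem : ∀ k : ℕ, gm ^ k ∈ S :=
    fun k => pow_mem (Algebra.self_mem_adjoin_singleton F gm) k
  obtain ⟨hcard, hpowS⟩ := adjoin_struct hn g hord
  set v : Fin n → F := Pi.single ⟨0, hn⟩ (1 : F) with hv
  have hv0 : v ≠ 0 := by
    intro h
    have := congrFun h ⟨0, hn⟩
    simp [hv] at this
  set e : S → (Fin n → F) := fun s => (s : Matrix (Fin n) (Fin n) F) *ᵥ v with he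
  have hunitv : ∀ k : ℕ, gm ^ k *ᵥ v ≠ 0 := by
    intro k h
    have : ((g ^ k)⁻¹ : GL (Fin n) F).val *ᵥ (gm ^ k *ᵥ v) = v := by
      rw [mulVec_mulVec]
      have : ((g ^ k)⁻¹ : GL (Fin n) F).val * gm ^ k = 1 := by
        rw [hgm, ← Units.val_pow_eq_pow_val, ← Units.val_mul, inv_mul_cancel, Units.val_one]
      rw [this, one_mulVec]
    rw [h, mulVec_zero] at this
    exact hv0 this.symm
  have einj : Function.Injective e := by
    intro s t h
    by_contra hne'
    have hst : ((s - t : S) : Matrix (Fin n) (Fin n) F) ≠ 0 := by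
      intro h0
      apply hne'
      have : (s : Matrix (Fin n) (Fin n) F) = t := by
        have := sub_eq_zero.mp h0
        simpa using this
      exact Subtype.ext this
    obtain ⟨k, hk⟩ := hpowS _ (s - t).2 hst
    apply hunitv k
    rw [hk]
    have : ((s - t : S) : Matrix (Fin n) (Fin n) F) *ᵥ v
        = (s : Matrix (Fin n) (Fin n) F) *ᵥ v - (t : Matrix (Fin n) (Fin n) F) *ᵥ v := by
      push_cast
      rw [sub_mulVec]
    rw [this]
    change e s - e t = 0
    rw [h, sub_self]
  have ebij : Function.Bijective e := by
    refine (Nat.bijective_iff_injective_and_card e).mpr ⟨einj, ?_⟩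
    rw [hcard]
    simp [Nat.card_eq_fintype_card]
  -- x commutes with everything in S
  have hxS : ∀ s : S, (x : Matrix (Fin n) (Fin n) F) * s = (s : Matrix (Fin n) (Fin n) F) * x := by
    intro s
    by_cases h0 : (s : Matrix (Fin n) (Fin n) F) = 0
    · rw [h0, zero_mul, mul_zero]
    · obtain ⟨k, hk⟩ := hpowS _ s.2 h0
      rw [← hk]
      exact (hx.pow_right k).eq
  obtain ⟨s₀, hs₀⟩ := ebij.surjective ((x : Matrix (Fin n) (Fin n) F) *ᵥ v)
  have hxs : (x : Matrix (Fin n) (Fin n) F) = (s₀ : Matrix (Fin n) (Fin n) F) := by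
    apply matrix_ext_mulVec
    intro w
    obtain ⟨t, rfl⟩ := ebij.surjective w
    have h1 : (x : Matrix (Fin n) (Fin n) F) *ᵥ e t
        = ((t : Matrix (Fin n) (Fin n) F) * (s₀ : Matrix (Fin n) (Fin n) F)) *ᵥ v := by
      show (x : Matrix (Fin n) (Fin n) F) *ᵥ ((t : Matrix (Fin n) (Fin n) F) *ᵥ v) = _
      rw [mulVec_mulVec, hxS t, ← mulVec_mulVec, ← hs₀]
      show (t : Matrix (Fin n) (Fin n) F) *ᵥ ((s₀ : Matrix (Fin n) (Fin n) F) *ᵥ v) = _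
      rw [mulVec_mulVec]
    have h2 : (s₀ : Matrix (Fin n) (Fin n) F) *ᵥ e t
        = ((t : Matrix (Fin n) (Fin n) F) * (s₀ : Matrix (Fin n) (Fin n) F)) *ᵥ v := by
      show (s₀ : Matrix (Fin n) (Fin n) F) *ᵥ ((t : Matrix (Fin n) (Fin n) F) *ᵥ v) = _
      rw [mulVec_mulVec, (adjoin_comm s₀.2 t.2).eq]
    rw [h1, h2]
  have hx0 : (x : Matrix (Fin n) (Fin n) F) ≠ 0 := by
    intro h
    have : (1 : Matrix (Fin n) (Fin n) F) = 0 := by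
      rw [← x.mul_inv, h, zero_mul]
    exact one_ne_zero this
  obtain ⟨k, hk⟩ := hpowS _ s₀.2 (by rw [← hxs]; exact hx0)
  exact ⟨k, Units.ext (by rw [Units.val_pow_eq_pow_val]; rw [hxs, ← hk])⟩
private lemma exists_frobenius (hn : 1 ≤ n) (g : GL (Fin n) F)
    (hord : orderOf g = Fintype.card F ^ n - 1) :
    ∃ X : GL (Fin n) F, ∀ k : ℕ, X * g ^ k * X⁻¹ = g ^ (k * Fintype.card F) := by
  classical
  have hne : Nonempty (Fin n) := ⟨⟨0, hn⟩⟩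
  set q := Fintype.card F with hqdef
  set gm : Matrix (Fin n) (Fin n) F := (g : Matrix (Fin n) (Fin n) F) with hgm
  set S := Algebra.adjoin F {gm} with hS
  have hmem : ∀ k : ℕ, gm ^ k ∈ S :=
    fun k => pow_mem (Algebra.self_mem_adjoin_singleton F gm) k
  obtain ⟨hcard, hpowS⟩ := adjoin_struct hn g hord
  set v : Fin n → F := Pi.single ⟨0, hn⟩ (1 : F) with hv
  have hv0 : v ≠ 0 := by
    intro h
    have := congrFun h ⟨0, hn⟩
    simp [hv] at this
  set e : S → (Fin n → F) := fun s => (s : Matrix (Fin n) (Fin n) F) *ᵥ v with he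
  have hunitv : ∀ k : ℕ, gm ^ k *ᵥ v ≠ 0 := by
    intro k h
    have : ((g ^ k)⁻¹ : GL (Fin n) F).val *ᵥ (gm ^ k *ᵥ v) = v := by
      rw [mulVec_mulVec]
      have : ((g ^ k)⁻¹ : GL (Fin n) F).val * gm ^ k = 1 := by
        rw [hgm, ← Units.val_pow_eq_pow_val, ← Units.val_mul, inv_mul_cancel, Units.val_one]
      rw [this, one_mulVec]
    rw [h, mulVec_zero] at this
    exact hv0 this.symm
  have einj : Function.Injective e := by
    intro s t h
    by_contra hne'
    have hst : ((s - t : S) : Matrix (Fin n) (Fin n) F) ≠ 0 := by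
      intro h0
      apply hne'
      have : (s : Matrix (Fin n) (Fin n) F) = t := by
        have := sub_eq_zero.mp h0
        simpa using this
      exact Subtype.ext this
    obtain ⟨k, hk⟩ := hpowS _ (s - t).2 hst
    apply hunitv k
    rw [hk]
    have : ((s - t : S) : Matrix (Fin n) (Fin n) F) *ᵥ v
        = (s : Matrix (Fin n) (Fin n) F) *ᵥ v - (t : Matrix (Fin n) (Fin n) F) *ᵥ v := by
      push_cast
      rw [sub_mulVec]
    rw [this]
    change e s - e t = 0
    rw [h, sub_self]
  have ebij : Function.Bijective e := by
    refine (Nat.bijective_iff_injective_and_card e).mpr ⟨einj, ?_⟩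
    rw [hcard]
    simp [Nat.card_eq_fintype_card]
  set eE : S ≃ (Fin n → F) := Equiv.ofBijective e ebij with heE
  -- char p facts
  obtain ⟨m, hp, hqm⟩ := FiniteField.card F (ringChar F)
  haveI : Fact (Nat.Prime (ringChar F)) := ⟨hp⟩
  haveI hcharM : CharP (Matrix (Fin n) (Fin n) F) (ringChar F) := inferInstance
  -- the Frobenius on S
  set frob : S → S := fun s => ⟨(s : Matrix (Fin n) (Fin n) F) ^ q, pow_mem s.2 q⟩ with hfrob
  have frobval : ∀ s : S, ((frob s : S) : Matrix (Fin n) (Fin n) F)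
      = (s : Matrix (Fin n) (Fin n) F) ^ q := fun s => rfl
  have frobInj : Function.Injective frob := by
    intro s t h
    have hval : (s : Matrix (Fin n) (Fin n) F) ^ q = (t : Matrix (Fin n) (Fin n) F) ^ q :=
      congrArg Subtype.val h
    by_contra hne'
    have hst : ((s - t : S) : Matrix (Fin n) (Fin n) F) ≠ 0 := by
      intro h0
      apply hne'
      have : (s : Matrix (Fin n) (Fin n) F) = t := by
        have := sub_eq_zero.mp h0
        simpa using this
      exact Subtype.ext this
    obtain ⟨k, hk⟩ := hpowS _ (s - t).2 hst
    have hcom : Commute (s : Matrix (Fin n) (Fin n) F) (t : Matrix (Fin n) (Fin n) F) :=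
      adjoin_comm s.2 t.2
    have hsub : ((s : Matrix (Fin n) (Fin n) F) - t) ^ q = 0 := by
      rw [hqdef, hqm, sub_pow_char_pow_of_commute _ _ hcom, ← hqm, ← hqdef, hval, sub_self]
    have : ((s - t : S) : Matrix (Fin n) (Fin n) F) ^ q = 0 := by
      have hco : ((s - t : S) : Matrix (Fin n) (Fin n) F)
          = (s : Matrix (Fin n) (Fin n) F) - t := by push_cast; ring
      rw [hco, hsub]
    rw [← hk, ← pow_mul] at this
    exact val_pow_ne_zero hn g (k * q) this
  have frobBij : Function.Bijective frob := Finite.injective_iff_bijective.mp frobInj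
  -- linearity data
  have eadd : ∀ s t : S, e (s + t) = e s + e t := by
    intro s t
    show ((s + t : S) : Matrix (Fin n) (Fin n) F) *ᵥ v = _
    push_cast
    rw [add_mulVec]
  have esmul : ∀ (c : F) (s : S), e (c • s) = c • e s := by
    intro c s
    show ((c • s : S) : Matrix (Fin n) (Fin n) F) *ᵥ v = _
    rw [SetLike.val_smul, smul_mulVec]
  have hsymm_add : ∀ w w', eE.symm (w + w') = eE.symm w + eE.symm w' := by
    intro w w'
    apply einj
    have h1 : ∀ u, e (eE.symm u) = u := fun u => eE.apply_symm_apply u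
    simp only [eadd, h1]
  have hsymm_smul : ∀ (c : F) w, eE.symm (c • w) = c • eE.symm w := by
    intro c w
    apply einj
    have h1 : ∀ u, e (eE.symm u) = u := fun u => eE.apply_symm_apply u
    simp only [esmul, h1]
  have frobAdd : ∀ s t : S, frob (s + t) = frob s + frob t := by
    intro s t
    apply Subtype.ext
    push_cast [frobval]
    rw [hqdef, hqm, add_pow_char_pow_of_commute _ _ (adjoin_comm s.2 t.2)]
  have frobSmul : ∀ (c : F) (s : S), frob (c • s) = c • frob s := by
    intro c s
    apply Subtype.ext
    rw [frobval, SetLike.val_smul, SetLike.val_smul, frobval, _root_.smul_pow,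
      hqdef, FiniteField.pow_card]
  set τ : (Fin n → F) →ₗ[F] (Fin n → F) :=
    { toFun := fun w => e (frob (eE.symm w))
      map_add' := by
        intro w w'
        show e (frob (eE.symm (w + w'))) = e (frob (eE.symm w)) + e (frob (eE.symm w'))
        rw [hsymm_add, frobAdd, eadd]
      map_smul' := by
        intro c w
        show e (frob (eE.symm (c • w))) = c • e (frob (eE.symm w))
        rw [hsymm_smul, frobSmul, esmul] } with hτ
  have τbij : Function.Bijective τ := by
    have : Function.Bijective (fun w => e (frob (eE.symm w)) : (Fin n → F) → (Fin n → F)) :=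
      ebij.comp (frobBij.comp eE.symm.bijective)
    exact this
  set τE : (Fin n → F) ≃ₗ[F] (Fin n → F) := LinearEquiv.ofBijective τ τbij with hτE
  have hcomp1 : τ ∘ₗ (τE.symm : (Fin n → F) →ₗ[F] (Fin n → F)) = LinearMap.id := by
    refine LinearMap.ext fun w => ?_
    exact τE.apply_symm_apply w
  have hcomp2 : (τE.symm : (Fin n → F) →ₗ[F] (Fin n → F)) ∘ₗ τ = LinearMap.id := by
    refine LinearMap.ext fun w => ?_
    exact τE.symm_apply_apply w
  set Xm : Matrix (Fin n) (Fin n) F := LinearMap.toMatrix' τ with hXm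
  set Xi : Matrix (Fin n) (Fin n) F :=
    LinearMap.toMatrix' (τE.symm : (Fin n → F) →ₗ[F] (Fin n → F)) with hXi
  have h1 : Xm * Xi = 1 := by
    rw [hXm, hXi, ← LinearMap.toMatrix'_comp, hcomp1, LinearMap.toMatrix'_id]
  have h2 : Xi * Xm = 1 := by
    rw [hXm, hXi, ← LinearMap.toMatrix'_comp, hcomp2, LinearMap.toMatrix'_id]
  have Xact : ∀ w, Xm *ᵥ w = e (frob (eE.symm w)) := by
    intro w
    rw [hXm, ← Matrix.toLin'_apply, Matrix.toLin'_toMatrix']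
    rfl
  -- key commutation on S
  have hXmat : ∀ s : S, Xm * (s : Matrix (Fin n) (Fin n) F)
      = ((s : Matrix (Fin n) (Fin n) F)) ^ q * Xm := by
    intro s
    apply matrix_ext_mulVec
    intro w
    obtain ⟨t, rfl⟩ := ebij.surjective w
    have hsymm_e : ∀ u : S, eE.symm (e u) = u := fun u => eE.symm_apply_apply u
    have hst : (s : Matrix (Fin n) (Fin n) F) *ᵥ e t = e (s * t) := by
      show _ = ((s * t : S) : Matrix (Fin n) (Fin n) F) *ᵥ v
      push_cast
      rw [← mulVec_mulVec]
    have frobmul : frob (s * t) = frob s * frob t := by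
      apply Subtype.ext
      push_cast [frobval]
      exact (adjoin_comm s.2 t.2).mul_pow q
    have hlhs : (Xm * (s : Matrix (Fin n) (Fin n) F)) *ᵥ e t = e (frob (s * t)) := by
      rw [← mulVec_mulVec, hst, Xact, hsymm_e]
    have hrhs : (((s : Matrix (Fin n) (Fin n) F)) ^ q * Xm) *ᵥ e t = e (frob (s * t)) := by
      rw [← mulVec_mulVec, Xact, hsymm_e, frobmul]
      show _ = ((frob s * frob t : S) : Matrix (Fin n) (Fin n) F) *ᵥ v
      push_cast [frobval]
      rw [← mulVec_mulVec]
    rw [hlhs, hrhs]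
  refine ⟨⟨Xm, Xi, h1, h2⟩, ?_⟩
  intro k
  apply Units.ext
  show Xm * (((g ^ k : GL (Fin n) F)) : Matrix (Fin n) (Fin n) F) * Xi
      = (((g ^ (k * q) : GL (Fin n) F)) : Matrix (Fin n) (Fin n) F)
  have key : Xm * gm ^ k = (gm ^ k) ^ q * Xm := hXmat ⟨gm ^ k, hmem k⟩
  rw [Units.val_pow_eq_pow_val, Units.val_pow_eq_pow_val, ← hgm, key,
    mul_assoc, h1, mul_one, ← pow_mul]
private def conjA (u : (Matrix (Fin n) (Fin n) F)ˣ) :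
    Matrix (Fin n) (Fin n) F →ₐ[F] Matrix (Fin n) (Fin n) F where
  toFun m := (u : Matrix (Fin n) (Fin n) F) * m * (u⁻¹ : (Matrix (Fin n) (Fin n) F)ˣ)
  map_one' := by
    show (u : Matrix (Fin n) (Fin n) F) * 1 * (u⁻¹ : (Matrix (Fin n) (Fin n) F)ˣ) = 1
    rw [mul_one, Units.mul_inv]
  map_mul' a b := by
    show (u : Matrix (Fin n) (Fin n) F) * (a * b) * (u⁻¹ : (Matrix (Fin n) (Fin n) F)ˣ)
      = (u : Matrix (Fin n) (Fin n) F) * a * (u⁻¹ : (Matrix (Fin n) (Fin n) F)ˣ)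
        * ((u : Matrix (Fin n) (Fin n) F) * b * (u⁻¹ : (Matrix (Fin n) (Fin n) F)ˣ))
    have h : ((u⁻¹ : (Matrix (Fin n) (Fin n) F)ˣ) : Matrix (Fin n) (Fin n) F)
        * (u : Matrix (Fin n) (Fin n) F) = 1 := u.inv_mul
    calc (u : Matrix (Fin n) (Fin n) F) * (a * b) * (u⁻¹ : (Matrix (Fin n) (Fin n) F)ˣ)
        = (u : Matrix (Fin n) (Fin n) F) * a * (1 * b)
          * (u⁻¹ : (Matrix (Fin n) (Fin n) F)ˣ) := by noncomm_ring
      _ = (u : Matrix (Fin n) (Fin n) F) * a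
          * ((((u⁻¹ : (Matrix (Fin n) (Fin n) F)ˣ) : Matrix (Fin n) (Fin n) F)
            * (u : Matrix (Fin n) (Fin n) F)) * b)
          * (u⁻¹ : (Matrix (Fin n) (Fin n) F)ˣ) := by rw [h]
      _ = (u : Matrix (Fin n) (Fin n) F) * a * (u⁻¹ : (Matrix (Fin n) (Fin n) F)ˣ)
          * ((u : Matrix (Fin n) (Fin n) F) * b
            * (u⁻¹ : (Matrix (Fin n) (Fin n) F)ˣ)) := by noncomm_ring
  map_zero' := by
    show (u : Matrix (Fin n) (Fin n) F) * 0 * (u⁻¹ : (Matrix (Fin n) (Fin n) F)ˣ) = 0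
    rw [mul_zero, zero_mul]
  map_add' a b := by
    show (u : Matrix (Fin n) (Fin n) F) * (a + b) * (u⁻¹ : (Matrix (Fin n) (Fin n) F)ˣ)
      = (u : Matrix (Fin n) (Fin n) F) * a * (u⁻¹ : (Matrix (Fin n) (Fin n) F)ˣ)
        + (u : Matrix (Fin n) (Fin n) F) * b * (u⁻¹ : (Matrix (Fin n) (Fin n) F)ˣ)
    rw [mul_add, add_mul]
  commutes' r := by
    show (u : Matrix (Fin n) (Fin n) F) * algebraMap F (Matrix (Fin n) (Fin n) F) r
        * (u⁻¹ : (Matrix (Fin n) (Fin n) F)ˣ) = algebraMap F (Matrix (Fin n) (Fin n) F) r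
    rw [← Algebra.commutes r ((u : Matrix (Fin n) (Fin n) F)), mul_assoc, Units.mul_inv,
      mul_one]

private lemma conj_root (u : GL (Fin n) F) (gm : Matrix (Fin n) (Fin n) F) :
    Polynomial.aeval ((u : Matrix (Fin n) (Fin n) F) * gm *
      ((u⁻¹ : GL (Fin n) F) : Matrix (Fin n) (Fin n) F)) (minpoly F gm) = 0 := by
  have h := Polynomial.aeval_algHom_apply (conjA (u : (Matrix (Fin n) (Fin n) F)ˣ)) gm
    (minpoly F gm)
  rw [minpoly.aeval, map_zero] at h
  exact h

private lemma singer_card (hn : 1 ≤ n) (g : GL (Fin n) F)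
    (hord : orderOf g = Fintype.card F ^ n - 1) :
    Nat.card (Subgroup.normalizer ((Subgroup.zpowers g : Set (GL (Fin n) F)))) = n * (Fintype.card F ^ n - 1) := by
  classical
  set q := Fintype.card F with hqdef
  have hq2 : 2 ≤ q := Fintype.one_lt_card
  have hqn2 : 2 ≤ q ^ n := le_trans hq2 (Nat.le_self_pow (by omega) q)
  set gm : Matrix (Fin n) (Fin n) F := (g : Matrix (Fin n) (Fin n) F) with hgm
  set S := Algebra.adjoin F {gm} with hS
  have hmem : ∀ k : ℕ, gm ^ k ∈ S :=
    fun k => pow_mem (Algebra.self_mem_adjoin_singleton F gm) k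
  obtain ⟨hcard, hpowS⟩ := adjoin_struct hn g hord
  set H := Subgroup.zpowers g with hH
  have hmemH : ∀ x : GL (Fin n) F, x ∈ H ↔ ∃ k : ℕ, g ^ k = x := by
    intro x
    rw [hH, ← mem_powers_iff_mem_zpowers]
    exact ⟨fun ⟨k, hk⟩ => ⟨k, hk⟩, fun ⟨k, hk⟩ => ⟨k, hk⟩⟩
  obtain ⟨X, hX⟩ := exists_frobenius hn g hord
  have hXj : ∀ j : ℕ, X ^ j * g * (X ^ j)⁻¹ = g ^ q ^ j := by
    intro j
    induction j with
    | zero => simp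
    | succ j ih =>
      have h1 : X ^ (j + 1) * g * (X ^ (j + 1))⁻¹ = X * (X ^ j * g * (X ^ j)⁻¹) * X⁻¹ := by
        group
      rw [h1, ih, hX (q ^ j), pow_succ]
  have hqinv : ∀ k : ℕ, g ^ (k * q ^ n) = g ^ k := by
    intro k
    have h1 : g ^ (q ^ n - 1) = 1 := by rw [← hord]; exact pow_orderOf_eq_one g
    have h2 : k * q ^ n = k * (q ^ n - 1) + k := by
      have h3 : q ^ n - 1 + 1 = q ^ n := Nat.sub_add_cancel (by omega)
      calc k * q ^ n = k * (q ^ n - 1 + 1) := by rw [h3]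
        _ = k * (q ^ n - 1) + k := by ring
    rw [h2, pow_add, mul_comm k, pow_mul, h1, one_pow, one_mul]
  have hXmemN : X ∈ Subgroup.normalizer (H : Set (GL (Fin n) F)) := by
    rw [Subgroup.mem_normalizer_iff]
    intro h
    constructor
    · intro hh
      obtain ⟨k, rfl⟩ := (hmemH h).mp hh
      rw [hX k]
      exact (hmemH _).mpr ⟨k * q, rfl⟩
    · intro hh
      obtain ⟨k, hk⟩ := (hmemH _).mp hh
      have hpow : (k * q ^ (n - 1)) * q = k * q ^ n := by
        have h4 : q ^ (n - 1) * q = q ^ n := by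
          rw [← pow_succ, Nat.sub_add_cancel hn]
        rw [mul_assoc, h4]
      have h2 : X * g ^ (k * q ^ (n - 1)) * X⁻¹ = X * h * X⁻¹ := by
        rw [hX, hpow, hqinv, hk]
      have h3 : g ^ (k * q ^ (n - 1)) = h :=
        mul_left_cancel (mul_right_cancel h2)
      rw [← h3]
      exact (hmemH _).mpr ⟨_, rfl⟩
  -- commutative domain structure on S
  letI : CommRing S :=
    { (inferInstance : Ring S) with
      mul_comm := fun a b => Subtype.ext (adjoin_comm a.2 b.2) }
  haveI hMnt : Nontrivial (Matrix (Fin n) (Fin n) F) :=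
    have : Nonempty (Fin n) := ⟨⟨0, hn⟩⟩
    inferInstance
  haveI : Nontrivial S := ⟨⟨1, 0, fun h => one_ne_zero (congrArg Subtype.val h)⟩⟩
  haveI : NoZeroDivisors S := by
    constructor
    intro a b hab
    by_cases ha : a = 0
    · exact Or.inl ha
    · right
      have haval : (a : Matrix (Fin n) (Fin n) F) ≠ 0 := fun h0 => ha (Subtype.ext h0)
      obtain ⟨k, hk⟩ := hpowS _ a.2 haval
      have habval : (a : Matrix (Fin n) (Fin n) F) * (b : Matrix (Fin n) (Fin n) F) = 0 :=
        congrArg Subtype.val hab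
      apply Subtype.ext
      have h1 : ((g ^ k)⁻¹ : GL (Fin n) F).val * ((g ^ k : GL (Fin n) F)).val = 1 := by
        rw [← Units.val_mul, inv_mul_cancel, Units.val_one]
      have h2 : ((g ^ k : GL (Fin n) F)).val = (a : Matrix (Fin n) (Fin n) F) := by
        rw [Units.val_pow_eq_pow_val]; exact hk
      calc (b : Matrix (Fin n) (Fin n) F)
          = (((g ^ k)⁻¹ : GL (Fin n) F).val * ((g ^ k : GL (Fin n) F)).val) * b := by
            rw [h1, one_mul]
        _ = ((g ^ k)⁻¹ : GL (Fin n) F).val * (((g ^ k : GL (Fin n) F)).val * b) := by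
            rw [mul_assoc]
        _ = ((g ^ k)⁻¹ : GL (Fin n) F).val * ((a : Matrix (Fin n) (Fin n) F) * b) := by
            rw [h2]
        _ = ((g ^ k)⁻¹ : GL (Fin n) F).val * 0 := by rw [habval]
        _ = 0 := mul_zero _
  haveI : IsDomain S := NoZeroDivisors.to_isDomain _
  -- minpoly facts
  have hint : IsIntegral F gm := IsIntegral.of_finite F gm
  have hμne : minpoly F gm ≠ 0 := (minpoly.monic hint).ne_zero
  have hμdeg : (minpoly F gm).natDegree ≤ n := by
    have hdvd : minpoly F gm ∣ gm.charpoly := minpoly.dvd F gm (Matrix.aeval_self_charpoly gm)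
    have := Polynomial.natDegree_le_of_dvd hdvd gm.charpoly_monic.ne_zero
    rwa [Matrix.charpoly_natDegree_eq_dim, Fintype.card_fin] at this
  set pS : Polynomial S := (minpoly F gm).map (algebraMap F S) with hpS
  have hpSne : pS ≠ 0 :=
    (Polynomial.map_ne_zero_iff (algebraMap F S).injective).mpr hμne
  have hrootS : ∀ s : S,
      Polynomial.aeval ((s : Matrix (Fin n) (Fin n) F)) (minpoly F gm) = 0 →
      s ∈ pS.roots := by
    intro s hs
    rw [Polynomial.mem_roots hpSne]
    show Polynomial.eval s pS = 0
    rw [hpS, Polynomial.eval_map, ← Polynomial.aeval_def]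
    have h2 : Polynomial.aeval ((Subalgebra.val S) s) (minpoly F gm)
        = (Subalgebra.val S) (Polynomial.aeval s (minpoly F gm)) :=
      Polynomial.aeval_algHom_apply _ s _
    have h3 : (Subalgebra.val S) (Polynomial.aeval s (minpoly F gm)) = 0 := by
      rw [← h2]; exact hs
    exact Subtype.ext h3
  have hb : 2 ≤ n → ∀ j : Fin n, q ^ (j : ℕ) < q ^ n - 1 := by
    intro hn2 j
    have h1 : q ^ (j : ℕ) ≤ q ^ (n - 1) := Nat.pow_le_pow_right (by omega) (by omega)
    have h2 : q ^ (n - 1) * 2 ≤ q ^ (n - 1) * q := Nat.mul_le_mul_left _ hq2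
    have h3 : q ^ (n - 1) * q = q ^ n := by rw [← pow_succ, Nat.sub_add_cancel hn]
    have h4 : 2 ≤ q ^ (n - 1) := le_trans hq2 (Nat.le_self_pow (by omega) q)
    omega
  have injJ : Function.Injective (fun j : Fin n => (⟨gm ^ q ^ (j : ℕ), hmem _⟩ : S)) := by
    rcases Nat.lt_or_ge n 2 with hn1 | hn2
    · intro a b _
      have ha := a.2; have hb' := b.2
      exact Fin.ext (by omega)
    · intro a b hab
      have hval : gm ^ q ^ (a : ℕ) = gm ^ q ^ (b : ℕ) := congrArg Subtype.val hab
      have := pow_val_inj g (by rw [hord]; exact hb hn2 a) (by rw [hord]; exact hb hn2 b) hval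
      exact Fin.ext (Nat.pow_right_injective hq2 this)
  have hconjval : ∀ j : ℕ,
      ((X ^ j : GL (Fin n) F) : Matrix (Fin n) (Fin n) F) * gm *
        (((X ^ j)⁻¹ : GL (Fin n) F) : Matrix (Fin n) (Fin n) F) = gm ^ q ^ j := by
    intro j
    have h3 := congrArg Units.val (hXj j)
    rw [Units.val_mul, Units.val_mul] at h3
    rw [hgm]
    rw [h3, Units.val_pow_eq_pow_val]
  have hrootJ : ∀ j : Fin n, (⟨gm ^ q ^ (j : ℕ), hmem _⟩ : S) ∈ pS.roots := by
    intro j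
    apply hrootS
    show Polynomial.aeval (gm ^ q ^ (j : ℕ)) (minpoly F gm) = 0
    rw [← hconjval (j : ℕ)]
    exact conj_root (X ^ (j : ℕ)) gm
  set Jset : Finset S :=
    Finset.image (fun j : Fin n => (⟨gm ^ q ^ (j : ℕ), hmem _⟩ : S)) Finset.univ with hJset
  have hJsub : Jset ⊆ pS.roots.toFinset := by
    intro s hs
    rw [hJset, Finset.mem_image] at hs
    obtain ⟨j, _, rfl⟩ := hs
    exact Multiset.mem_toFinset.mpr (hrootJ j)
  have hJcard : Jset.card = n := by
    rw [hJset, Finset.card_image_of_injective _ injJ, Finset.card_univ, Fintype.card_fin]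
  have hRcard : pS.roots.toFinset.card ≤ n :=
    calc pS.roots.toFinset.card ≤ Multiset.card pS.roots := Multiset.toFinset_card_le _
      _ ≤ pS.natDegree := Polynomial.card_roots' pS
      _ ≤ (minpoly F gm).natDegree := Polynomial.natDegree_map_le
      _ ≤ n := hμdeg
  have hJeq : Jset = pS.roots.toFinset :=
    Finset.eq_of_subset_of_card_le hJsub (by omega)
  have hroot : ∀ y : GL (Fin n) F, y ∈ Subgroup.normalizer (H : Set (GL (Fin n) F)) →
      ∃ j : Fin n, y * g * y⁻¹ = g ^ q ^ (j : ℕ) := by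
    intro y hy
    have hgH : g ∈ H := by rw [hH]; exact Subgroup.mem_zpowers g
    have hcH : y * g * y⁻¹ ∈ H := (Subgroup.mem_normalizer_iff.mp hy g).mp hgH
    obtain ⟨k, hk⟩ := (hmemH _).mp hcH
    have hcval : ((y * g * y⁻¹ : GL (Fin n) F) : Matrix (Fin n) (Fin n) F) = gm ^ k := by
      rw [← hk, Units.val_pow_eq_pow_val, hgm]
    have hcS : ((y * g * y⁻¹ : GL (Fin n) F) : Matrix (Fin n) (Fin n) F) ∈ S := by
      rw [hcval]; exact hmem k
    have hcroot : (⟨_, hcS⟩ : S) ∈ pS.roots := by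
      apply hrootS
      show Polynomial.aeval ((y * g * y⁻¹ : GL (Fin n) F) : Matrix (Fin n) (Fin n) F)
        (minpoly F gm) = 0
      rw [Units.val_mul, Units.val_mul, hgm]
      exact conj_root y gm
    have hmemJ : (⟨_, hcS⟩ : S) ∈ Jset := by
      rw [hJeq]; exact Multiset.mem_toFinset.mpr hcroot
    rw [hJset, Finset.mem_image] at hmemJ
    obtain ⟨j, _, hj⟩ := hmemJ
    refine ⟨j, ?_⟩
    apply Units.ext
    have hval := congrArg Subtype.val hj
    show ((y * g * y⁻¹ : GL (Fin n) F) : Matrix (Fin n) (Fin n) F) = _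
    rw [Units.val_pow_eq_pow_val, ← hgm]
    exact hval.symm
  -- the bijection
  have hXN : ∀ j : ℕ, X ^ j ∈ Subgroup.normalizer (H : Set (GL (Fin n) F)) := fun j => pow_mem hXmemN j
  set Φ : Fin n × H → Subgroup.normalizer (H : Set (GL (Fin n) F)) := fun jh =>
    ⟨X ^ ((jh.1 : ℕ)) * (jh.2 : GL (Fin n) F),
      mul_mem (hXN _) (Subgroup.le_normalizer jh.2.2)⟩ with hΦ
  have keyinj : ∀ (i j : Fin n) (h h' : H), (i : ℕ) ≤ (j : ℕ) →
      X ^ (i : ℕ) * (h : GL (Fin n) F) = X ^ (j : ℕ) * (h' : GL (Fin n) F) →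
      (i : ℕ) = (j : ℕ) ∧ (h : GL (Fin n) F) = (h' : GL (Fin n) F) := by
    intro i j h h' hle heq
    set d := (j : ℕ) - (i : ℕ) with hddef
    have hXd : X ^ d = (h : GL (Fin n) F) * ((h' : GL (Fin n) F))⁻¹ := by
      have h1 : X ^ (j : ℕ) = X ^ (i : ℕ) * X ^ d := by
        rw [← pow_add]; congr 1; omega
      rw [h1, mul_assoc] at heq
      have h2 : (h : GL (Fin n) F) = X ^ d * (h' : GL (Fin n) F) := mul_left_cancel heq
      rw [h2, mul_inv_cancel_right]
    have hdH : X ^ d ∈ H := by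
      rw [hXd]; exact mul_mem h.2 (inv_mem h'.2)
    obtain ⟨m, hm⟩ := (hmemH _).mp hdH
    have hcomm : X ^ d * g * (X ^ d)⁻¹ = g := by
      rw [← hm]; group
    have hd0 : d = 0 := by
      have h4 := hXj d
      rw [hcomm] at h4
      have h5 : g ^ (1 : ℕ) = g ^ q ^ d := by rw [pow_one]; exact h4
      have h6 := pow_eq_pow_iff_modEq.mp h5
      rw [hord] at h6
      have hdlt : d < n := by have := j.2; omega
      rcases Nat.lt_or_ge n 2 with hn1 | hn2
      · omega
      · have hqd : q ^ d < q ^ n - 1 := hb hn2 ⟨d, hdlt⟩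
        have h9 : 4 ≤ q ^ n := by
          calc (4 : ℕ) = 2 * 2 := rfl
            _ ≤ q * q := Nat.mul_le_mul hq2 hq2
            _ = q ^ 2 := (pow_two q).symm
            _ ≤ q ^ n := Nat.pow_le_pow_right (by omega) hn2
        have h7 : 1 = q ^ d := Nat.ModEq.eq_of_lt_of_lt h6 (by omega) hqd
        by_contra hdne
        have : q ≤ q ^ d := Nat.le_self_pow hdne q
        omega
    refine ⟨by omega, ?_⟩
    have hij : X ^ (i : ℕ) = X ^ (j : ℕ) := by
      congr 1; omega
    rw [hij] at heq
    exact mul_left_cancel heq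
  have Φinj : Function.Injective Φ := by
    rintro ⟨i, h⟩ ⟨j, h'⟩ heq
    have heq' : X ^ (i : ℕ) * (h : GL (Fin n) F) = X ^ (j : ℕ) * (h' : GL (Fin n) F) :=
      congrArg Subtype.val heq
    rcases le_total (i : ℕ) (j : ℕ) with hle | hle
    · obtain ⟨hij, hhh⟩ := keyinj i j h h' hle heq'
      exact Prod.ext (Fin.ext hij) (Subtype.ext hhh)
    · obtain ⟨hij, hhh⟩ := keyinj j i h' h hle heq'.symm
      exact Prod.ext (Fin.ext hij.symm) (Subtype.ext hhh.symm)
  have Φsurj : Function.Surjective Φ := by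
    rintro ⟨y, hy⟩
    obtain ⟨j, hj⟩ := hroot y hy
    set z : GL (Fin n) F := (X ^ (j : ℕ))⁻¹ * y with hz
    have hzg : z * g * z⁻¹ = g := by
      have h1 : z * g * z⁻¹ = (X ^ (j : ℕ))⁻¹ * (y * g * y⁻¹) * X ^ (j : ℕ) := by
        rw [hz]; group
      rw [h1, hj, ← hXj (j : ℕ)]
      group
    have hcz : Commute ((z : GL (Fin n) F) : Matrix (Fin n) (Fin n) F) gm := by
      have h2 : z * g = g * z := by
        calc z * g = (z * g * z⁻¹) * z := by group
          _ = g * z := by rw [hzg]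
      have h3 := congrArg Units.val h2
      rw [Units.val_mul, Units.val_mul] at h3
      rw [hgm]
      exact h3
    obtain ⟨k, hk⟩ := cent_mem hn g hord z hcz
    have hzH : z ∈ H := (hmemH z).mpr ⟨k, hk⟩
    refine ⟨⟨j, ⟨z, hzH⟩⟩, ?_⟩
    apply Subtype.ext
    show X ^ (j : ℕ) * z = y
    rw [hz, mul_inv_cancel_left]
  have hbijΦ : Function.Bijective Φ := ⟨Φinj, Φsurj⟩
  have hfinal := Nat.card_eq_of_bijective Φ hbijΦ
  rw [← hfinal, Nat.card_prod, Nat.card_eq_fintype_card, Fintype.card_fin, hH,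
    Nat.card_zpowers, hord]
end SingerAux

/-- The normalizer of a Singer subgroup of `GL_n(𝔽_q)` has cardinality `n (q^n - 1)`. -/
theorem stmt_9 {F : Type*} [Field F] [Fintype F] (n : ℕ) (hn : 1 ≤ n)
    (H : Subgroup (GL (Fin n) F))
    (hHc : IsCyclic H) (hHcard : Nat.card H = Fintype.card F ^ n - 1) :
    Nat.card (Subgroup.normalizer (H : Set (GL (Fin n) F))) = n * (Fintype.card F ^ n - 1) := by
  obtain ⟨g₀, hg₀⟩ := hHc.exists_generator
  set g : GL (Fin n) F := (g₀ : GL (Fin n) F) with hg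
  have hzp : H = Subgroup.zpowers g := by
    ext x
    constructor
    · intro hx
      obtain ⟨i, hi⟩ := Subgroup.mem_zpowers_iff.mp (hg₀ ⟨x, hx⟩)
      refine Subgroup.mem_zpowers_iff.mpr ⟨i, ?_⟩
      have := congrArg (Subgroup.subtype H) hi
      rw [map_zpow] at this
      exact this
    · intro hx
      obtain ⟨i, hi⟩ := Subgroup.mem_zpowers_iff.mp hx
      rw [← hi]
      exact zpow_mem g₀.2 i
  have hordg : orderOf g = Fintype.card F ^ n - 1 := by
    have h1 : orderOf g₀ = Nat.card H := orderOf_eq_card_of_forall_mem_zpowers hg₀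
    have h2 : orderOf g = orderOf g₀ :=
      orderOf_injective H.subtype (Subgroup.subtype_injective H) g₀
    rw [h2, h1, hHcard]
  rw [hzp]
  exact singer_card hn g hordg
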